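/- arXiv:2301.05084 — 6 statements merged into one kernel-verified Lean document; each statement's English description precedes it below -/
import Mathlib

section
/- Let X be a finite type and f : (X → ℚ) → ℚ. Then the following are equivalent: (1) f(a + b) = f(a) + f(b) for all a, b : X → ℚ (pointwise addition), f(a) ≤ f(b) whenever a(x) ≤ b(x) for all x ∈ X, and f applied to the constant-1 function equals 1; (2) there exists λ : X → ℚ with λ(i) ≥ 0 for all i ∈ X, Σ_{i∈X} λ(i) = 1, and f(x) = Σ_{i∈X} λ(i)·x(i) for all x : X → ℚ. -/
/-- **Statement 6.** Let `X` be a finite type and `f : (X → ℚ) → ℚ`.  Then `f`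
is additive, monotone, and sends the constant-`1` function to `1` if and only
if there exists a rational probability distribution `λ` on `X` such that
`f x = ∑ i, λ i * x i` for all `x : X → ℚ`. -/
theorem additive_monotone_unital_iff_convex_combination
    (X : Type) [Fintype X] (f : (X → ℚ) → ℚ) :
    ((∀ a b : X → ℚ, f (a + b) = f a + f b) ∧
     (∀ a b : X → ℚ, (∀ x, a x ≤ b x) → f a ≤ f b) ∧
     f (fun _ => (1 : ℚ)) = 1) ↔
    (∃ l : X → ℚ, (∀ i, 0 ≤ l i) ∧ (∑ i : X, l i = 1) ∧
      ∀ x : X → ℚ, f x = ∑ i : X, l i * x i) := by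
  constructor
  · rintro ⟨hadd, hmono, hone⟩
    classical
    set g : (X → ℚ) →+ ℚ := AddMonoidHom.mk' f hadd with hg
    have hsmul : ∀ (q : ℚ) (a : X → ℚ), f (q • a) = q * f a := by
      intro q a
      simpa only [smul_eq_mul, AddMonoidHom.coe_toRatLinearMap, AddMonoidHom.mk'_apply, hg] using g.toRatLinearMap.map_smul q a
    refine ⟨fun i => f (Pi.single i 1), ?_, ?_, ?_⟩
    · intro i
      have h0 : f 0 = 0 := g.map_zero
      have := hmono 0 (Pi.single i 1) (fun x => by
        by_cases h : x = i <;> simp [Pi.single_apply, h])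
      simpa [h0] using this
    · have : (∑ i : X, Pi.single i (1 : ℚ)) = fun _ => (1 : ℚ) := by
        funext j
        simp [Finset.sum_apply, Pi.single_apply]
      calc ∑ i : X, f (Pi.single i 1) = f (∑ i : X, Pi.single i 1) :=
            (map_sum g _ _).symm
        _ = 1 := by rw [this]; exact hone
    · intro x
      have hx : x = ∑ i : X, (x i) • (Pi.single i 1 : X → ℚ) := by
        funext j
        simp [Finset.sum_apply, Pi.single_apply, mul_comm]
      calc f x = f (∑ i : X, (x i) • (Pi.single i 1 : X → ℚ)) := by rw [← hx]
        _ = ∑ i : X, f ((x i) • (Pi.single i 1 : X → ℚ)) := map_sum g _ _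
        _ = ∑ i : X, f (Pi.single i 1) * x i := by
            refine Finset.sum_congr rfl fun i _ => ?_
            rw [hsmul]; ring
  · rintro ⟨l, hpos, hsum, hf⟩
    refine ⟨?_, ?_, ?_⟩
    · intro a b
      simp [hf, mul_add, Finset.sum_add_distrib]
    · intro a b hab
      rw [hf, hf]
      exact Finset.sum_le_sum fun i _ =>
        mul_le_mul_of_nonneg_left (hab i) (hpos i)
    · simp [hf, hsum]
end

section
/- Fix a set 𝒯 of finite types and a set 𝒮 of functions between members of 𝒯, let γ be a gadget into L-structures over (𝒯, 𝒮), and let B be an L-structure. If there exists an L-homomorphism from γ(P^{𝒯,𝒮}) to B, then for every label cover structure S supported on (𝒯, 𝒮) there exists an L-homomorphism from γ(S) to π_B(S). -/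
universe u v

/-- A *label cover structure* `S` consists of, for every finite type `Y`, a type
`S.elts Y` of elements of type `Y`, and, for every function `σ : Y → Z` between
finite types, a binary relation `S.rel σ` between elements of type `Y` and
elements of type `Z` (the constraints `E_σ`). -/
structure LabelCover : Type (u + 1) where
  elts : ∀ (Y : Type) [Fintype Y], Type u
  rel : ∀ {Y Z : Type} [Fintype Y] [Fintype Z], (Y → Z) → elts Y → elts Z → Prop

/-- A homomorphism of label cover structures: a family of maps preserving the
types of elements and all constraints. -/
structure LCHom (S : LabelCover.{u}) (T : LabelCover.{v}) where
  app : ∀ (Y : Type) [Fintype Y], S.elts Y → T.elts Y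
  map_rel : ∀ {Y Z : Type} [Fintype Y] [Fintype Z] (σ : Y → Z)
      (s : S.elts Y) (t : S.elts Z), S.rel σ s t → T.rel σ (app Y s) (app Z t)

open FirstOrder

/-- Pairs `(s, b)` of an element `s` of `S` of type `Y` together with a map
`b : Y → B`; these represent elements of the `L`-structure `π_B(S)` before
taking the quotient. -/
def PiBPair (S : LabelCover.{u}) (B : Type) : Type (max 1 u) :=
  Σ' (Y : Type) (iY : Fintype Y), @LabelCover.elts S Y iY × (Y → B)

/-- The identifications generating the equivalence relation defining `π_B(S)`:
`(t, b)` is identified with `(s, b ∘ σ)` for every constraint `(s, t) ∈ E_σ^S`. -/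
inductive PiBRel (S : LabelCover.{u}) (B : Type) : PiBPair S B → PiBPair S B → Prop
  | mk {Y Z : Type} (iY : Fintype Y) (iZ : Fintype Z) (σ : Y → Z)
      (s : @LabelCover.elts S Y iY) (t : @LabelCover.elts S Z iZ) (b : Z → B)
      (h : @LabelCover.rel S Y Z iY iZ σ s t) :
      PiBRel S B ⟨Y, iY, (s, b ∘ σ)⟩ ⟨Z, iZ, (t, b)⟩

/-- The carrier of the `L`-structure `π_B(S)`: the quotient of the set of pairs
`(s, b)` by the equivalence relation generated by identifying `(t, b)` with
`(s, b ∘ σ)` for every constraint `(s, t) ∈ E_σ^S`. -/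
def PiB (S : LabelCover.{u}) (B : Type) : Type (max 1 u) :=
  Quot (PiBRel S B)

/-- The class `[s; b]` as an element of `π_B(S)`. -/
def piBmk (S : LabelCover.{u}) {B : Type} {Y : Type} [iY : Fintype Y]
    (s : S.elts Y) (b : Y → B) : PiB S B :=
  Quot.mk _ ⟨Y, iY, (s, b)⟩

/-- The `L`-structure on `π_B(S)`: an `n`-ary relation symbol `R` holds on a
tuple if and only if the tuple can be written `([s; b 0], …, [s; b (n-1)])`
with a common element `s` of `S` of some type `Y` such that
`R^B (b 0 d, …, b (n-1) d)` holds for every `d : Y`. -/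
instance piBStructure (L : Language) [L.IsRelational] (S : LabelCover.{u}) (B : Type)
    [L.Structure B] : L.Structure (PiB S B) where
  funMap := fun f _ => isEmptyElim f
  RelMap := fun {n} R v =>
    ∃ (Y : Type) (iY : Fintype Y) (s : @LabelCover.elts S Y iY) (b : Fin n → Y → B),
      (∀ i, v i = Quot.mk _ ⟨Y, iY, (s, b i)⟩) ∧
      ∀ d : Y, Language.Structure.RelMap R (fun i => b i d)

/-- A *gadget* `γ` into `L`-structures over a set `Ty` of (finite) types and a
set `Fn` of functions between members of `Ty`: an `L`-structure `D Y` for every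
`Y ∈ Ty`, an `L`-structure `G σ` for every `σ ∈ Fn`, and `L`-homomorphisms
`p1 : D Y → G σ` and `p2 : D Z → G σ` for every `σ : Y → Z` in `Fn`. -/
structure Gadget (L : Language) (Ty : Type → Prop)
    (Fn : ∀ ⦃Y Z : Type⦄, (Y → Z) → Prop) where
  D : ∀ (Y : Type), Ty Y → Type
  strD : ∀ (Y : Type) (hY : Ty Y), L.Structure (D Y hY)
  G : ∀ {Y Z : Type} (σ : Y → Z), Fn σ → Type
  strG : ∀ {Y Z : Type} (σ : Y → Z) (hσ : Fn σ), L.Structure (G σ hσ)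
  p1 : ∀ {Y Z : Type} (σ : Y → Z) (hσ : Fn σ) (hY : Ty Y),
    @Language.Hom L (D Y hY) (G σ hσ) (strD Y hY) (strG σ hσ)
  p2 : ∀ {Y Z : Type} (σ : Y → Z) (hσ : Fn σ) (hZ : Ty Z),
    @Language.Hom L (D Z hZ) (G σ hσ) (strD Z hZ) (strG σ hσ)

/-- The disjoint union underlying `γ(S)`: one copy of `D Y` for every element
`s` of `S` of type `Y`, and one copy of `G σ` for every constraint
`(s, t) ∈ E_σ^S`. -/
def GammaCarrier {L : Language} {Ty : Type → Prop} {Fn : ∀ ⦃Y Z : Type⦄, (Y → Z) → Prop}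
    (g : Gadget L Ty Fn) (S : LabelCover.{u}) : Type (max 1 u) :=
  (Σ' (Y : Type) (iY : Fintype Y) (_s : @LabelCover.elts S Y iY) (hY : Ty Y), g.D Y hY) ⊕
  (Σ' (Y Z : Type) (iY : Fintype Y) (iZ : Fintype Z) (σ : Y → Z)
      (s : @LabelCover.elts S Y iY) (t : @LabelCover.elts S Z iZ)
      (_hst : @LabelCover.rel S Y Z iY iZ σ s t) (hσ : Fn σ), g.G σ hσ)

/-- The identifications generating the equivalence relation defining `γ(S)`:
for each constraint `c = (s, t) ∈ E_σ^S`, each element `d` of the copy of `D Y`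
at `s` is identified with `p1 σ d` in the copy of `G σ` at `c`, and each
element `e` of the copy of `D Z` at `t` is identified with `p2 σ e` in the copy
of `G σ` at `c`. -/
inductive GammaRel {L : Language} {Ty : Type → Prop} {Fn : ∀ ⦃Y Z : Type⦄, (Y → Z) → Prop}
    (g : Gadget L Ty Fn) (S : LabelCover.{u}) :
    GammaCarrier g S → GammaCarrier g S → Prop
  | glue1 {Y Z : Type} (iY : Fintype Y) (iZ : Fintype Z) (σ : Y → Z)
      (s : @LabelCover.elts S Y iY) (t : @LabelCover.elts S Z iZ)
      (hst : @LabelCover.rel S Y Z iY iZ σ s t) (hσ : Fn σ) (hY : Ty Y)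
      (d : g.D Y hY) :
      GammaRel g S (Sum.inl ⟨Y, iY, s, hY, d⟩)
        (Sum.inr ⟨Y, Z, iY, iZ, σ, s, t, hst, hσ, (@Language.Hom.toFun L (g.D Y hY) (g.G σ hσ) (g.strD Y hY) (g.strG σ hσ) (g.p1 σ hσ hY)) d⟩)
  | glue2 {Y Z : Type} (iY : Fintype Y) (iZ : Fintype Z) (σ : Y → Z)
      (s : @LabelCover.elts S Y iY) (t : @LabelCover.elts S Z iZ)
      (hst : @LabelCover.rel S Y Z iY iZ σ s t) (hσ : Fn σ) (hZ : Ty Z)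
      (e : g.D Z hZ) :
      GammaRel g S (Sum.inl ⟨Z, iZ, t, hZ, e⟩)
        (Sum.inr ⟨Y, Z, iY, iZ, σ, s, t, hst, hσ, (@Language.Hom.toFun L (g.D Z hZ) (g.G σ hσ) (g.strD Z hZ) (g.strG σ hσ) (g.p2 σ hσ hZ)) e⟩)

/-- The carrier of the `L`-structure `γ(S)`: the quotient of the disjoint union
of the copies by the equivalence generated by the gluing identifications. -/
def GammaS {L : Language} {Ty : Type → Prop} {Fn : ∀ ⦃Y Z : Type⦄, (Y → Z) → Prop}
    (g : Gadget L Ty Fn) (S : LabelCover.{u}) : Type (max 1 u) :=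
  Quot (GammaRel g S)

/-- The `L`-structure on `γ(S)`: a relation holds of a tuple if and only if the
tuple is the image under the quotient map of a tuple in the corresponding
relation of one of the copies. -/
instance gammaStructure (L : Language) [L.IsRelational] {Ty : Type → Prop}
    {Fn : ∀ ⦃Y Z : Type⦄, (Y → Z) → Prop} (g : Gadget L Ty Fn) (S : LabelCover.{u}) :
    L.Structure (GammaS g S) where
  funMap := fun f _ => isEmptyElim f
  RelMap := fun {n} R v =>
    (∃ (Y : Type) (iY : Fintype Y) (s : @LabelCover.elts S Y iY) (hY : Ty Y)
        (w : Fin n → g.D Y hY),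
        (@Language.Structure.RelMap L (g.D Y hY) (g.strD Y hY) n R w) ∧
        ∀ i, v i = Quot.mk _ (Sum.inl ⟨Y, iY, s, hY, w i⟩)) ∨
    (∃ (Y Z : Type) (iY : Fintype Y) (iZ : Fintype Z) (σ : Y → Z)
        (s : @LabelCover.elts S Y iY) (t : @LabelCover.elts S Z iZ)
        (hst : @LabelCover.rel S Y Z iY iZ σ s t) (hσ : Fn σ)
        (w : Fin n → g.G σ hσ),
        (@Language.Structure.RelMap L (g.G σ hσ) (g.strG σ hσ) n R w) ∧
        ∀ i, v i = Quot.mk _ (Sum.inr ⟨Y, Z, iY, iZ, σ, s, t, hst, hσ, w i⟩))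

/-- The restricted label cover template `P^{Ty,Fn}`: its elements of type `Y`
are the elements of `Y` itself when `Y ∈ Ty` (and there are none otherwise),
and `E_σ = { (y, σ y) : y ∈ Y }` for `σ ∈ Fn` (and is empty otherwise). -/
def restrictedLC (Ty : Type → Prop) (Fn : ∀ ⦃Y Z : Type⦄, (Y → Z) → Prop) :
    LabelCover.{0} where
  elts := fun Y [Fintype Y] => { _y : Y // Ty Y }
  rel := fun {Y Z} [Fintype Y] [Fintype Z] σ a b => Fn σ ∧ b.1 = σ a.1

/-- A label cover structure `S` is *supported on* `(Ty, Fn)` if it has no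
elements of types outside `Ty` and no constraints along functions outside
`Fn`. -/
def SupportedOn (S : LabelCover.{u}) (Ty : Type → Prop)
    (Fn : ∀ ⦃Y Z : Type⦄, (Y → Z) → Prop) : Prop :=
  (∀ (Y : Type) [Fintype Y], ¬ Ty Y → IsEmpty (S.elts Y)) ∧
  (∀ {Y Z : Type} [Fintype Y] [Fintype Z] (σ : Y → Z)
      (s : S.elts Y) (t : S.elts Z), S.rel σ s t → Fn σ)



section Aux

variable {L : Language} [L.IsRelational] {Ty : Type → Prop}
  {Fn : ∀ ⦃Y Z : Type⦄, (Y → Z) → Prop}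
  (hFn : ∀ {Y Z : Type} (σ : Y → Z), Fn σ → Ty Y ∧ Ty Z)
  (g : Gadget L Ty Fn) {B : Type} [L.Structure B]
  (f : GammaS g (restrictedLC Ty Fn) →[L] B) (S : LabelCover.{0})

/-- The map on representatives. -/
def gammaF : GammaCarrier g S → PiB S B
  | Sum.inl ⟨Y, iY, s, hY, d⟩ =>
      Quot.mk _ ⟨Y, iY, (s, fun y =>
        f (Quot.mk _ (Sum.inl ⟨Y, iY, ⟨y, hY⟩, hY, d⟩)))⟩
  | Sum.inr ⟨Y, Z, iY, iZ, σ, s, _t, _hst, hσ, e⟩ =>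
      Quot.mk _ ⟨Y, iY, (s, fun y =>
        f (Quot.mk _ (Sum.inr ⟨Y, Z, iY, iZ, σ, ⟨y, (hFn σ hσ).1⟩,
          ⟨σ y, (hFn σ hσ).2⟩, ⟨hσ, rfl⟩, hσ, e⟩)))⟩

theorem quotmk_congr {S : LabelCover.{0}} {B : Type} {Y : Type} (iY : Fintype Y)
    (s : @LabelCover.elts S Y iY) {b1 b2 : Y → B} (hb : ∀ y, b1 y = b2 y) :
    (Quot.mk (PiBRel S B) ⟨Y, iY, (s, b1)⟩ : PiB S B)
      = Quot.mk (PiBRel S B) ⟨Y, iY, (s, b2)⟩ := by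
  have : b1 = b2 := funext hb
  rw [this]

theorem gammaF_sound : ∀ a b, GammaRel g S a b →
    gammaF (hFn := fun σ => hFn σ) g f S a = gammaF (hFn := fun σ => hFn σ) g f S b := by
  intro a b hab
  cases hab with
  | glue1 iY iZ σ s t hst hσ hY d =>
      simp only [gammaF]
      exact quotmk_congr iY s (fun y => congrArg f (Quot.sound
        (GammaRel.glue1 (g := g) (S := restrictedLC Ty Fn) iY iZ σ ⟨y, hY⟩ ⟨σ y, (hFn σ hσ).2⟩ ⟨hσ, rfl⟩ hσ hY d)))
  | glue2 iY iZ σ s t hst hσ hZ e =>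
      simp only [gammaF]
      have step := Quot.sound (PiBRel.mk iY iZ σ s t
        (fun z => f (Quot.mk _ (Sum.inl ⟨_, iZ, ⟨z, hZ⟩, hZ, e⟩))) hst)
      refine step.symm.trans ?_
      exact quotmk_congr iY s (fun y => congrArg f (Quot.sound
        (GammaRel.glue2 (g := g) (S := restrictedLC Ty Fn) iY iZ σ ⟨y, (hFn σ hσ).1⟩ ⟨σ y, (hFn σ hσ).2⟩
          ⟨hσ, rfl⟩ hσ hZ e)))

end Aux

/-- Fix a set `Ty` of finite types and a set `Fn` of functions
between members of `Ty`, let `γ` be a gadget into `L`-structures over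
`(Ty, Fn)`, and let `B` be an `L`-structure.  If there is an `L`-homomorphism
from `γ(P^{Ty,Fn})` to `B`, then for every label cover structure `S` supported
on `(Ty, Fn)` there is an `L`-homomorphism from `γ(S)` to `π_B(S)`. -/
theorem gamma_hom_to_piB (L : Language) [L.IsRelational]
    (Ty : Type → Prop) (Fn : ∀ ⦃Y Z : Type⦄, (Y → Z) → Prop)
    (hTy : ∀ Y : Type, Ty Y → Finite Y)
    (hFn : ∀ {Y Z : Type} (σ : Y → Z), Fn σ → Ty Y ∧ Ty Z)
    (g : Gadget L Ty Fn) (B : Type) [L.Structure B]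
    (h : Nonempty (GammaS g (restrictedLC Ty Fn) →[L] B)) :
    ∀ S : LabelCover.{0}, SupportedOn S Ty Fn →
      Nonempty (GammaS g S →[L] PiB S B) := by
  obtain ⟨f⟩ := h
  intro S _hS
  refine ⟨⟨Quot.lift (gammaF (hFn := fun σ => hFn σ) g f S)
    (gammaF_sound (hFn := fun σ => hFn σ) g f S), fun {n} F => isEmptyElim F, ?_⟩⟩
  intro n R v hv
  cases hv with
  | inl hl =>
      obtain ⟨Y, iY, s, hY, w, hw, hvi⟩ := hl
      refine ⟨Y, iY, s, fun i y => f (Quot.mk _ (Sum.inl ⟨Y, iY, ⟨y, hY⟩, hY, w i⟩)),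
        fun i => ?_, fun y => ?_⟩
      · show Quot.lift _ _ (v i) = _
        rw [hvi i]; simp only [gammaF]; rfl
      · have hrel : @Language.Structure.RelMap L (GammaS g (restrictedLC Ty Fn)) _ n R
            (fun i => Quot.mk _ (Sum.inl ⟨Y, iY, ⟨y, hY⟩, hY, w i⟩)) :=
          Or.inl ⟨Y, iY, ⟨y, hY⟩, hY, w, hw, fun i => rfl⟩
        exact f.map_rel R _ hrel
  | inr hr =>
      obtain ⟨Y, Z, iY, iZ, σ, s, t, hst, hσ, w, hw, hvi⟩ := hr
      refine ⟨Y, iY, s, fun i y => f (Quot.mk _ (Sum.inr ⟨Y, Z, iY, iZ, σ,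
          ⟨y, (hFn σ hσ).1⟩, ⟨σ y, (hFn σ hσ).2⟩, ⟨hσ, rfl⟩, hσ, w i⟩)),
        fun i => ?_, fun y => ?_⟩
      · show Quot.lift _ _ (v i) = _
        rw [hvi i]; simp only [gammaF]; rfl
      · have hrel : @Language.Structure.RelMap L (GammaS g (restrictedLC Ty Fn)) _ n R
            (fun i => Quot.mk _ (Sum.inr ⟨Y, Z, iY, iZ, σ, ⟨y, (hFn σ hσ).1⟩,
              ⟨σ y, (hFn σ hσ).2⟩, ⟨hσ, rfl⟩, hσ, w i⟩)) :=
          Or.inr ⟨Y, Z, iY, iZ, σ, ⟨y, (hFn σ hσ).1⟩, ⟨σ y, (hFn σ hσ).2⟩,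
            ⟨hσ, rfl⟩, hσ, w, hw, fun i => rfl⟩
        exact f.map_rel R _ hrel
end

section
/- Let S and T be label cover structures such that there exists a homomorphism of label cover structures from S to π_P(T). Then for every structure B in a purely relational first-order language L there exists an L-homomorphism from π_B(S) to π_B(T). -/
universe u v

/-- Pairs `(s, f)` of an element `s` of `S` of type `Y` together with a map
`f : Y → Z`; these represent elements of `π_P(S)` of type `Z` before taking
the quotient. -/
def PiPPair (S : LabelCover.{u}) (Z : Type) : Type (max 1 u) :=
  Σ' (Y : Type) (iY : Fintype Y), @LabelCover.elts S Y iY × (Y → Z)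

/-- The identifications generating the equivalence relation defining `π_P(S)`:
`(t, f)` is identified with `(s, f ∘ σ)` for every constraint `(s, t) ∈ E_σ^S`. -/
inductive PiPRel (S : LabelCover.{u}) (Z : Type) : PiPPair S Z → PiPPair S Z → Prop
  | mk {Y Y' : Type} (iY : Fintype Y) (iY' : Fintype Y') (σ : Y → Y')
      (s : @LabelCover.elts S Y iY) (t : @LabelCover.elts S Y' iY') (f : Y' → Z)
      (h : @LabelCover.rel S Y Y' iY iY' σ s t) :
      PiPRel S Z ⟨Y, iY, (s, f ∘ σ)⟩ ⟨Y', iY', (t, f)⟩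

/-- The label cover structure `π_P(S)`: its elements of type `Z` are the
classes `[s; f]` of pairs `(s, f)` with `s` an element of `S` of type `Y` and
`f : Y → Z`, under the equivalence generated by identifying `(t, f)` with
`(s, f ∘ σ)` for every constraint `(s, t) ∈ E_σ^S`; its constraints are
`E_{σ'} = { ([s; f], [s; σ' ∘ f]) }`. -/
def piP (S : LabelCover.{u}) : LabelCover.{max 1 u} where
  elts := fun Z [Fintype Z] => Quot (PiPRel S Z)
  rel := fun {Z Z'} [Fintype Z] [Fintype Z'] σ' a b =>
    ∃ (Y : Type) (iY : Fintype Y) (s : @LabelCover.elts S Y iY) (f : Y → Z),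
      a = Quot.mk _ ⟨Y, iY, (s, f)⟩ ∧ b = Quot.mk _ ⟨Y, iY, (s, σ' ∘ f)⟩

/-- The class `[s; f]` as an element of `π_P(S)` of type `Z`. -/
def piPmk (S : LabelCover.{u}) {Y Z : Type} [iY : Fintype Y] [Fintype Z]
    (s : S.elts Y) (f : Y → Z) : (piP S).elts Z :=
  Quot.mk _ ⟨Y, iY, (s, f)⟩

open FirstOrder

/-- Lift an element of `π_P(T)` of type `Y` together with `b : Y → B` to an
element of `π_B(T)`. -/
def liftPiP (T : LabelCover.{u}) (B : Type) {Y : Type} [Fintype Y] :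
    (piP T).elts Y → (Y → B) → PiB T B :=
  Quot.lift (fun p => fun b => @piBmk T B p.1 p.2.1 p.2.2.1 (b ∘ p.2.2.2))
    (by
      rintro _ _ r
      cases r with
      | @mk Y' Y'' iY' iY'' σ s t f hrel =>
        funext b
        exact Quot.sound (PiBRel.mk iY' iY'' σ s t (b ∘ f) hrel))

theorem liftPiP_mk (T : LabelCover.{u}) (B : Type) {Y' Y : Type} [iY' : Fintype Y']
    [Fintype Y] (s : T.elts Y') (f : Y' → Y) (b : Y → B) :
    liftPiP T B (piPmk T s f) b = piBmk T s (b ∘ f) := rfl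

/-- **Statement 8.** Let `S` and `T` be label cover structures such that there
is a homomorphism of label cover structures from `S` to `π_P(T)`.  Then for
every structure `B` in a purely relational first-order language `L` there is an
`L`-homomorphism from `π_B(S)` to `π_B(T)`. -/
theorem piB_hom_of_piP_hom (S T : LabelCover.{u})
    (h : Nonempty (LCHom S (piP T))) :
    ∀ (L : Language) [L.IsRelational] (B : Type) [L.Structure B],
      Nonempty (PiB S B →[L] PiB T B) := by
  obtain ⟨h⟩ := h
  intro L _ B _
  refine ⟨⟨Quot.lift (fun p => @liftPiP T B p.1 p.2.1 (@LCHom.app S (piP T) h p.1 p.2.1 p.2.2.1) p.2.2.2) ?_, ?_, ?_⟩⟩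
  · rintro _ _ r
    cases r with
    | @mk Y Z iY iZ σ s t b hrel =>
    obtain ⟨Y', iY', s', f, h1, h2⟩ :=
      h.map_rel σ s t hrel
    show @liftPiP T B Y iY (@LCHom.app S (piP T) h Y iY s) (b ∘ σ)
        = @liftPiP T B Z iZ (@LCHom.app S (piP T) h Z iZ t) b
    rw [h1, h2]
    rfl
  · intro n f; exact isEmptyElim f
  · rintro n R v ⟨Y, iY, s, b, hv, hR⟩
    obtain ⟨⟨Y', iY', s', f⟩, hrep⟩ := Quot.exists_rep (@LCHom.app S (piP T) h Y iY s)
    refine ⟨Y', iY', s', fun i => b i ∘ f, fun i => ?_, fun d => hR (f d)⟩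
    · show Quot.lift (fun p => @liftPiP T B p.1 p.2.1 (@LCHom.app S (piP T) h p.1 p.2.1 p.2.2.1) p.2.2.2) _ (v i) = _
      rw [hv i]
      show @liftPiP T B Y iY (@LCHom.app S (piP T) h Y iY s) (b i) = _
      rw [← hrep]
      rfl
end

section
/- Let L be a purely relational first-order language, let 𝔛, A, B be L-structures, and let k ≥ 1. If there exists an L-homomorphism from 𝔛 to A, then there exists an L-homomorphism from κ(𝔛) to B, where κ(𝔛) is the output of the k-consistency reduction built from the greatest consistent system of partial homomorphisms from 𝔛 to A and from powers of B, as defined in the context. -/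
open FirstOrder

/-- Restriction of a function defined on a subset `K` to a subset `K' ⊆ K`. -/
def restrictDom {X A : Type} {K K' : Set X} (h : K' ⊆ K) (f : ↥K → A) : ↥K' → A :=
  fun y => f ⟨y.1, h y.2⟩

/-- A map `f : K → A` defined on a subset `K` of (the carrier of) an
`L`-structure `𝔛` is a *partial homomorphism* to `A` if it preserves every
relation all of whose arguments lie in `K`. -/
def IsPartialHom (L : Language) (𝔛 A : Type) [L.Structure 𝔛] [L.Structure A]
    (K : Set 𝔛) (f : ↥K → A) : Prop :=
  ∀ {n : ℕ} (R : L.Relations n) (v : Fin n → 𝔛) (hv : ∀ i, v i ∈ K),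
    Language.Structure.RelMap R v → Language.Structure.RelMap R (fun i => f ⟨v i, hv i⟩)

/-- A *consistent system* (with parameter `k`): a family `F` assigning to each
subset `K` of the carrier of `𝔛` with at most `k` elements a set `F K` of
partial homomorphisms from `K` to `A` such that, for all `K' ⊆ K` with
`|K| ≤ k`, restrictions of members of `F K` belong to `F K'` and every member
of `F K'` extends to a member of `F K`. -/
def IsConsistentSystem (L : Language) (𝔛 A : Type) [L.Structure 𝔛] [L.Structure A]
    (k : ℕ) (F : ∀ K : Set 𝔛, Set ((↥K : Type) → A)) : Prop :=
  (∀ K : Set 𝔛, K.encard ≤ k → ∀ f ∈ F K, IsPartialHom L 𝔛 A K f) ∧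
  (∀ (K K' : Set 𝔛), K.encard ≤ k → ∀ (h : K' ⊆ K),
    (∀ f ∈ F K, restrictDom h f ∈ F K') ∧
    (∀ g ∈ F K', ∃ f ∈ F K, restrictDom h f = g))

/-- The greatest consistent system (consistent systems are closed under
pointwise unions): `gcs L 𝔛 A k K` is the union of `F K` over all consistent
systems `F`. -/
def gcs (L : Language) (𝔛 A : Type) [L.Structure 𝔛] [L.Structure A] (k : ℕ)
    (K : Set 𝔛) : Set ((↥K : Type) → A) :=
  { f | ∃ F, IsConsistentSystem L 𝔛 A k F ∧ f ∈ F K }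

/-- Members of the greatest consistent system restrict to members of the
greatest consistent system. -/
theorem gcs_restrict_mem (L : Language) (𝔛 A : Type) [L.Structure 𝔛] [L.Structure A]
    (k : ℕ) {K K' : Set 𝔛} (hK : K.encard ≤ k) (h : K' ⊆ K)
    {f : (↥K : Type) → A} (hf : f ∈ gcs L 𝔛 A k K) :
    restrictDom h f ∈ gcs L 𝔛 A k K' := by
  obtain ⟨F, hF, hfF⟩ := hf
  exact ⟨F, hF, (hF.2 K K' hK h).1 f hfF⟩

/-- Pairs `(K, b)` with `K` a subset of the carrier of `𝔛` of at most `k`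
elements and `b : 𝓕_K → B`, where `𝓕` is the greatest consistent system; these
represent elements of `κ(𝔛)` before taking the quotient. -/
def KappaPair (L : Language) (𝔛 A B : Type) [L.Structure 𝔛] [L.Structure A] (k : ℕ) :
    Type :=
  Σ' (K : Set 𝔛) (_ : K.encard ≤ k), ((↥(gcs L 𝔛 A k K) : Type) → B)

/-- The identifications generating the equivalence relation defining `κ(𝔛)`:
`(K, b ∘ ρ)` is identified with `(K', b)` for all `K' ⊆ K` and `b : 𝓕_{K'} → B`,
where `ρ : 𝓕_K → 𝓕_{K'}` is the restriction map. -/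
inductive KappaRel (L : Language) (𝔛 A B : Type) [L.Structure 𝔛] [L.Structure A]
    (k : ℕ) : KappaPair L 𝔛 A B k → KappaPair L 𝔛 A B k → Prop
  | mk (K K' : Set 𝔛) (hK : K.encard ≤ k) (h : K' ⊆ K)
      (b : (↥(gcs L 𝔛 A k K') : Type) → B) :
      KappaRel L 𝔛 A B k
        ⟨K, hK, fun f => b ⟨restrictDom h f.1, gcs_restrict_mem L 𝔛 A k hK h f.2⟩⟩
        ⟨K', (Set.encard_mono h).trans hK, b⟩

/-- The carrier of `κ(𝔛)`, the output of the `k`-consistency reduction built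
from the greatest consistent system of partial homomorphisms from `𝔛` to `A`
and from powers of `B`. -/
def Kappa (L : Language) (𝔛 A B : Type) [L.Structure 𝔛] [L.Structure A] (k : ℕ) :
    Type :=
  Quot (KappaRel L 𝔛 A B k)

/-- The `L`-structure on `κ(𝔛)`: an `n`-ary relation symbol `R` holds of a
tuple if and only if the tuple can be written `([K; b 0], …, [K; b (n-1)])`
with a common `K` such that `R^B (b 0 f, …, b (n-1) f)` holds for every
`f ∈ 𝓕_K`. -/
instance kappaStructure (L : Language) [L.IsRelational] (𝔛 A B : Type)
    [L.Structure 𝔛] [L.Structure A] [L.Structure B] (k : ℕ) :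
    L.Structure (Kappa L 𝔛 A B k) where
  funMap := fun f _ => isEmptyElim f
  RelMap := fun {n} R v =>
    ∃ (K : Set 𝔛) (hK : K.encard ≤ k)
      (w : Fin n → ((↥(gcs L 𝔛 A k K) : Type) → B)),
      (∀ i, v i = Quot.mk _ ⟨K, hK, w i⟩) ∧
      ∀ f : ↥(gcs L 𝔛 A k K), Language.Structure.RelMap R (fun i => w i f)

/-- **Statement 10.** Let `L` be a purely relational first-order language,
`𝔛, A, B` be `L`-structures, and `k ≥ 1`.  If there is an `L`-homomorphism from
`𝔛` to `A`, then there is an `L`-homomorphism from `κ(𝔛)` to `B`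
(completeness of the `k`-consistency reduction). -/
theorem kappa_completeness (L : Language) [L.IsRelational] (𝔛 A B : Type)
    [L.Structure 𝔛] [L.Structure A] [L.Structure B] (k : ℕ) (hk : 1 ≤ k)
    (h : Nonempty (𝔛 →[L] A)) :
    Nonempty (Kappa L 𝔛 A B k →[L] B) := by
  obtain ⟨φ⟩ := h
  have hmem : ∀ K : Set 𝔛, (fun x : ↥K => φ x.1) ∈ gcs L 𝔛 A k K := by
    intro K
    refine ⟨fun K => ({fun x : ↥K => φ x.1} : Set (↥K → A)), ⟨?_, ?_⟩, rfl⟩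
    · intro K _ f hf
      subst hf
      intro n R v hv hR
      exact φ.map_rel R (fun i => v i) hR
    · intro K K' _ hsub
      constructor
      · intro f hf; subst hf; rfl
      · intro g hg; subst hg; exact ⟨_, rfl, rfl⟩
  have key : ∀ {K K' : Set 𝔛} (hsub : K' ⊆ K),
      restrictDom hsub (fun x : ↥K => φ x.1) = (fun x : ↥K' => φ x.1) := fun _ => rfl
  refine ⟨⟨Quot.lift (fun p : KappaPair L 𝔛 A B k => p.2.2 ⟨fun x => φ x.1, hmem p.1⟩) ?_,
      fun {n} f => isEmptyElim f, ?_⟩⟩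
  · rintro _ _ ⟨K, K', hK, hsub, b⟩
    exact congrArg b (Subtype.ext (key hsub))
  · rintro n R v ⟨K, hK, w, hv, hw⟩
    have h2 := hw ⟨fun x => φ x.1, hmem K⟩
    convert h2 using 2 with i
    change Quot.lift _ _ (v i) = _
    rw [hv i]
end

section
/- Let X be a set, k ≥ 1, A a set, and for each finite subset K of X with at most k elements let 𝓕_K be a finite set of functions K → A. Suppose that rational numbers x_{K,f} ≥ 0, given for every such K and every f ∈ 𝓕_K, satisfy Σ_{f∈𝓕_K} x_{K,f} = 1 for every such K, and Σ_{f∈𝓕_K : f|_L = g} x_{K,f} = x_{L,g} for all subsets L ⊊ K (|K| ≤ k) and all g ∈ 𝓕_L. Then the family 𝓕'_K := { f ∈ 𝓕_K : x_{K,f} > 0 } is a nonempty consistent system: each 𝓕'_K is nonempty, and for all L ⊊ K with |K| ≤ k, the restriction f|_L belongs to 𝓕'_L for every f ∈ 𝓕'_K, and every g ∈ 𝓕'_L equals f|_L for some f ∈ 𝓕'_K. -/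
open Classical

/-- Restriction of a function on (the coercion of) a finite subset `K` to a
subset `L ⊆ K`. -/
def restrictFinset {X A : Type} {L K : Finset X} (h : L ⊆ K)
    (f : (↥K : Type) → A) : (↥L : Type) → A :=
  fun y => f ⟨y.1, h y.2⟩

/-- **Statement 11.** Let `X` be a set, `k ≥ 1`, `A` a set, and for each finite
subset `K` of `X` with at most `k` elements let `𝓕 K` be a finite set of
functions `K → A`.  If nonnegative rationals `x K f` (for `f ∈ 𝓕 K`) satisfy
the `k`-th level Sherali–Adams system — `∑ f ∈ 𝓕 K, x K f = 1` for every such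
`K`, and `∑_{f ∈ 𝓕 K, f|_L = g} x K f = x L g` for all `L ⊊ K` and `g ∈ 𝓕 L` —
then the family `𝓕' K = { f ∈ 𝓕 K : x K f > 0 }` is a nonempty consistent
system: each `𝓕' K` is nonempty, restrictions of members of `𝓕' K` belong to
`𝓕' L`, and every member of `𝓕' L` is the restriction of a member of `𝓕' K`. -/
theorem sherali_adams_support_is_consistent
    (X A : Type) (k : ℕ) (hk : 1 ≤ k)
    (𝓕 : ∀ K : Finset X, Finset ((↥K : Type) → A))
    (x : ∀ K : Finset X, ((↥K : Type) → A) → ℚ)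
    (hnonneg : ∀ (K : Finset X), K.card ≤ k → ∀ f ∈ 𝓕 K, 0 ≤ x K f)
    (hsum : ∀ (K : Finset X), K.card ≤ k → ∑ f ∈ 𝓕 K, x K f = 1)
    (hmarg : ∀ (K L : Finset X), K.card ≤ k → ∀ (hLK : L ⊂ K), ∀ g ∈ 𝓕 L,
      (∑ f ∈ 𝓕 K, if restrictFinset hLK.subset f = g then x K f else 0) = x L g) :
    (∀ (K : Finset X), K.card ≤ k → ∃ f ∈ 𝓕 K, 0 < x K f) ∧
    (∀ (K L : Finset X), K.card ≤ k → ∀ (hLK : L ⊂ K),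
      (∀ f ∈ 𝓕 K, 0 < x K f →
        restrictFinset hLK.subset f ∈ 𝓕 L ∧ 0 < x L (restrictFinset hLK.subset f)) ∧
      (∀ g ∈ 𝓕 L, 0 < x L g →
        ∃ f ∈ 𝓕 K, 0 < x K f ∧ restrictFinset hLK.subset f = g)) := by

  have hpos : ∀ (K : Finset X), K.card ≤ k → ∃ f ∈ 𝓕 K, 0 < x K f := by
    intro K hK
    by_contra h
    push_neg at h
    have hle : ∑ f ∈ 𝓕 K, x K f ≤ 0 := Finset.sum_nonpos fun f hf => h f hf
    rw [hsum K hK] at hle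
    linarith
  refine ⟨hpos, ?_⟩
  intro K L hK hLK
  have hL : L.card ≤ k := le_of_lt (lt_of_lt_of_le (Finset.card_lt_card hLK) hK)
  have key : ∀ f ∈ 𝓕 K, 0 < x K f → restrictFinset hLK.subset f ∈ 𝓕 L := by
    intro f hf hxf
    by_contra hmem
    have h1 : ∑ f ∈ 𝓕 K, (if restrictFinset hLK.subset f ∈ 𝓕 L then x K f else 0) = 1 := by
      calc ∑ f ∈ 𝓕 K, (if restrictFinset hLK.subset f ∈ 𝓕 L then x K f else 0)
          = ∑ f ∈ 𝓕 K, ∑ g ∈ 𝓕 L, (if restrictFinset hLK.subset f = g then x K f else 0) := by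
            refine Finset.sum_congr rfl fun f _ => ?_
            rw [Finset.sum_ite_eq (𝓕 L) (restrictFinset hLK.subset f) (fun _ => x K f)]
        _ = ∑ g ∈ 𝓕 L, ∑ f ∈ 𝓕 K, (if restrictFinset hLK.subset f = g then x K f else 0) :=
            Finset.sum_comm
        _ = ∑ g ∈ 𝓕 L, x L g := Finset.sum_congr rfl fun g hg => hmarg K L hK hLK g hg
        _ = 1 := hsum L hL
    have h2 : ∑ f ∈ 𝓕 K, (if restrictFinset hLK.subset f ∈ 𝓕 L then x K f else 0)
        < ∑ f ∈ 𝓕 K, x K f := by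
      apply Finset.sum_lt_sum
      · intro i hi
        split
        · exact le_refl _
        · exact hnonneg K hK i hi
      · exact ⟨f, hf, by rw [if_neg hmem]; exact hxf⟩
    rw [h1, hsum K hK] at h2
    exact lt_irrefl 1 h2
  constructor
  · intro f hf hxf
    have hm := key f hf hxf
    refine ⟨hm, ?_⟩
    have hmarg' := hmarg K L hK hLK _ hm
    rw [← hmarg']
    calc (0:ℚ) < x K f := hxf
      _ = (if restrictFinset hLK.subset f = restrictFinset hLK.subset f then x K f else 0) := by
          rw [if_pos rfl]
      _ ≤ ∑ f' ∈ 𝓕 K, (if restrictFinset hLK.subset f' = restrictFinset hLK.subset f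
            then x K f' else 0) := by
          refine Finset.single_le_sum (f := fun f' => if restrictFinset hLK.subset f' = restrictFinset hLK.subset f then x K f' else 0) (fun i hi => ?_) hf
          split
          · exact hnonneg K hK i hi
          · exact le_refl _
  · intro g hg hxg
    by_contra h
    push_neg at h
    have hle : ∑ f ∈ 𝓕 K, (if restrictFinset hLK.subset f = g then x K f else 0) ≤ 0 := by
      apply Finset.sum_nonpos
      intro f hf
      split
      · rename_i heq
        by_contra hlt
        push_neg at hlt
        exact h f hf hlt heq
      · exact le_refl _
    rw [hmarg K L hK hLK g hg] at hle
    linarith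
end

section
/- Let X be a finite type and π : X → X a map satisfying π(π(x)) = x and π(x) ≠ x for all x ∈ X (a fixed-point-free involution). Then there is no function f : (X → Bool) → Bool satisfying both f(¬ ∘ x) = ¬ f(x) for all x : X → Bool and f(x ∘ π) = f(x) for all x : X → Bool. -/
/-- **Statement 14.** Let `X` be a finite type and `π : X → X` a fixed-point-free
involution.  Then there is no function `f : (X → Bool) → Bool` which is both
self-dual (`f (¬ ∘ x) = ¬ f x` for all `x`) and invariant under permuting its
coordinates by `π` (`f (x ∘ π) = f x` for all `x`). -/
theorem no_selfdual_invariant_under_fpf_involution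
    (X : Type) [Fintype X] (π : X → X)
    (hinv : ∀ x, π (π x) = x) (hfpf : ∀ x, π x ≠ x) :
    ¬ ∃ f : (X → Bool) → Bool,
        (∀ x : X → Bool, f (fun i => ! x i) = ! f x) ∧
        (∀ x : X → Bool, f (x ∘ π) = f x) := by
  rintro ⟨f, hsd, hπ⟩
  classical
  have equiv : Equivalence (fun i j : X => j = i ∨ j = π i) := by
    constructor
    · intro i; left; rfl
    · rintro i j (rfl | rfl)
      · left; rfl
      · right; exact (hinv i).symm
    · rintro i j k (rfl | rfl) (rfl | rfl) <;> simp [hinv] <;> tauto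
  let s : Setoid X := ⟨_, equiv⟩
  let x : X → Bool := fun i => decide ((Quotient.mk s i).out = i)
  have key : ∀ i, x (π i) = ! x i := by
    intro i
    have hq : Quotient.mk s (π i) = Quotient.mk s i :=
      Quotient.sound (Or.inr (hinv i).symm)
    have hout : i = (Quotient.mk s i).out ∨ i = π ((Quotient.mk s i).out) :=
      Quotient.mk_out (s := s) i
    simp only [x, hq]
    rcases hout with h | h
    · have h1 : (Quotient.mk s i).out = i := h.symm
      simp [h1, Ne.symm (hfpf i)]
    · have h1 : (Quotient.mk s i).out = π i := by
        have h2 := congrArg π h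
        rw [hinv] at h2
        exact h2.symm
      simp [h1, hfpf i]
  have hx : (x ∘ π) = fun i => ! x i := funext fun i => key i
  have := hπ x
  rw [hx, hsd x] at this
  exact Bool.not_ne_self (f x) this
end
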